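/- Let 0 < m < M and let n be a natural number. For every real polynomial p of degree at most n with p(0) = 1, we have sup_{λ ∈ [m, M]} |p(λ)| ≥ 1 / T_n((M+m)/(M−m)), where T_n is the degree-n Chebyshev polynomial of the first kind. Moreover, equality is achieved by the translated and scaled Chebyshev polynomial p(λ) = T_n((M+m−2λ)/(M−m)) / T_n((M+m)/(M−m)). -/

import Mathlib

set_option maxHeartbeats 1000000

open Polynomial Polynomial.Chebyshev Real Set

lemma cheb_ge_one_aux (n : ℕ) {x : ℝ} (hx : 1 ≤ x) :
    1 ≤ (T ℝ (n : ℤ)).eval x ∧ (T ℝ (n : ℤ)).eval x ≤ (T ℝ ((n : ℤ) + 1)).eval x := by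
  induction n with
  | zero => simp [T_zero, T_one]; linarith
  | succ k ih =>
    obtain ⟨h1, h2⟩ := ih
    have hrec := T_add_two ℝ (k : ℤ)
    have heval : (T ℝ ((k : ℤ) + 2)).eval x
        = 2 * x * (T ℝ ((k : ℤ) + 1)).eval x - (T ℝ (k : ℤ)).eval x := by
      rw [hrec]; simp
    constructor
    · push_cast; linarith
    · push_cast
      have : ((k : ℤ) + 1 + 1) = (k : ℤ) + 2 := by ring
      rw [this, heval]
      nlinarith

lemma cheb_natDegree_le (n : ℕ) :
    (T ℝ (n : ℤ)).natDegree ≤ n ∧ (T ℝ ((n : ℤ) + 1)).natDegree ≤ n + 1 := by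
  induction n with
  | zero => simp [T_zero, T_one, natDegree_X_le]
  | succ k ih =>
    obtain ⟨h1, h2⟩ := ih
    constructor
    · push_cast; exact h2
    · push_cast
      have : ((k : ℤ) + 1 + 1) = (k : ℤ) + 2 := by ring
      rw [this, T_add_two]
      refine le_trans (natDegree_sub_le _ _) ?_
      refine max_le ?_ (by omega)
      refine le_trans (natDegree_mul_le) ?_
      have hx : (2 * X : Polynomial ℝ).natDegree ≤ 1 :=
        le_trans natDegree_mul_le (by simp)
      omega

lemma cheb_abs_le_one (n : ℤ) {y : ℝ} (h1 : -1 ≤ y) (h2 : y ≤ 1) :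
    |(T ℝ n).eval y| ≤ 1 := by
  rw [← Real.cos_arccos h1 h2, T_real_cos]
  exact Real.abs_cos_le_one _

lemma cheb_eval_one (n : ℤ) : (T ℝ n).eval 1 = 1 := by
  have := T_real_cos 0 n
  simpa using this

/-- **Chebyshev extremality:** among real polynomials `p` of degree at most `n` with
`p(0) = 1`, the sup-norm on `[m, M]` is at least `1 / Tₙ((M+m)/(M−m))`, and this bound is
achieved by the translated and scaled Chebyshev polynomial
`λ ↦ Tₙ((M+m−2λ)/(M−m)) / Tₙ((M+m)/(M−m))`. -/
theorem chebyshev_extremal (m M : ℝ) (hm : 0 < m) (hmM : m < M) (n : ℕ) :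
    (∀ p : Polynomial ℝ, p.natDegree ≤ n → p.eval 0 = 1 →
      sSup ((fun lam => |p.eval lam|) '' Set.Icc m M) ≥
        1 / (Polynomial.Chebyshev.T ℝ (n : ℤ)).eval ((M + m) / (M - m))) ∧
    sSup ((fun lam =>
        |(Polynomial.Chebyshev.T ℝ (n : ℤ)).eval ((M + m - 2 * lam) / (M - m)) /
          (Polynomial.Chebyshev.T ℝ (n : ℤ)).eval ((M + m) / (M - m))|) '' Set.Icc m M) =
      1 / (Polynomial.Chebyshev.T ℝ (n : ℤ)).eval ((M + m) / (M - m)) := by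
  have hd : (0:ℝ) < M - m := by linarith
  set σ : ℝ := (M + m) / (M - m) with hσdef
  have hσ : 1 ≤ σ := by rw [hσdef, le_div_iff₀ hd]; linarith
  set c0 : ℝ := (T ℝ (n:ℤ)).eval σ with hc0def
  have hc0 : 1 ≤ c0 := (cheb_ge_one_aux n hσ).1
  have hc0pos : 0 < c0 := by linarith
  have harg_mem : ∀ x ∈ Icc m M,
      -1 ≤ (M + m - 2*x)/(M-m) ∧ (M + m - 2*x)/(M-m) ≤ 1 := by
    intro x hx
    obtain ⟨h1, h2⟩ := hx
    constructor
    · rw [neg_le, ← neg_div]; rw [div_le_one hd]; linarith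
    · rw [div_le_one hd]; linarith
  constructor
  · -- lower bound
    intro p hdeg hp0
    rw [ge_iff_le]
    by_contra hlt
    push_neg at hlt
    have hbdd : BddAbove ((fun lam => |p.eval lam|) '' Icc m M) :=
      isCompact_Icc.bddAbove_image (p.continuous.abs).continuousOn
    have hpb : ∀ x ∈ Icc m M, |p.eval x| < 1/c0 := fun x hx =>
      lt_of_le_of_lt (le_csSup hbdd ⟨x, hx, rfl⟩) hlt
    set Q : Polynomial ℝ :=
      (T ℝ (n:ℤ)).comp (Polynomial.C σ - Polynomial.C (2/(M-m)) * Polynomial.X) with hQdef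
    have hQeval : ∀ x : ℝ, Q.eval x = (T ℝ (n:ℤ)).eval ((M + m - 2*x)/(M-m)) := by
      intro x
      rw [hQdef, Polynomial.eval_comp]
      congr 1
      simp only [eval_sub, eval_mul, eval_C, eval_X, hσdef]
      field_simp
    set r : Polynomial ℝ := Polynomial.C (1/c0) * Q - p with hrdef
    have hreval : ∀ x : ℝ,
        r.eval x = (1/c0) * (T ℝ (n:ℤ)).eval ((M+m-2*x)/(M-m)) - p.eval x := by
      intro x
      rw [hrdef]
      simp [hQeval x]
    have hrdeg : r.natDegree ≤ n := by
      rw [hrdef]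
      refine le_trans (natDegree_sub_le _ _) (max_le ?_ hdeg)
      refine le_trans natDegree_mul_le ?_
      simp only [natDegree_C, zero_add]
      rw [hQdef]
      refine le_trans natDegree_comp_le ?_
      have h1 : (Polynomial.C σ - Polynomial.C (2/(M-m)) * Polynomial.X :
          Polynomial ℝ).natDegree ≤ 1 := by
        refine le_trans (natDegree_sub_le _ _) (max_le (by simp) ?_)
        exact le_trans natDegree_mul_le (by simp)
      calc (T ℝ (n:ℤ)).natDegree * (Polynomial.C σ - Polynomial.C (2/(M-m)) *
            Polynomial.X : Polynomial ℝ).natDegree ≤ n * 1 :=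
          Nat.mul_le_mul (cheb_natDegree_le n).1 h1
        _ = n := by omega
    have hr0 : r.eval 0 = 0 := by
      rw [hreval 0, hp0]
      have harg : (M + m - 2*(0:ℝ)) / (M - m) = σ := by rw [hσdef]; ring_nf
      rw [harg, ← hc0def]
      field_simp
      norm_num
    set lam : ℕ → ℝ := fun k => (M + m - (M - m) * Real.cos (k * π / n)) / 2 with hlamdef
    have hlam_mem : ∀ k : ℕ, lam k ∈ Icc m M := by
      intro k
      have h1 := Real.neg_one_le_cos (k * π / n)
      have h2 := Real.cos_le_one (k * π / n)
      constructor <;> (simp only [hlamdef]; nlinarith)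
    have hlam_arg : ∀ k : ℕ, (M + m - 2 * lam k)/(M-m) = Real.cos (k*π/n) := by
      intro k
      have hnum : M + m - 2 * lam k = (M-m) * Real.cos (k*π/n) := by
        simp only [hlamdef]; ring
      rw [hnum, mul_comm, mul_div_assoc, div_self hd.ne', mul_one]
    have hlam_lt : ∀ j k : ℕ, j < k → k ≤ n → lam j < lam k := by
      intro j k hjk hkn
      have hn0 : 0 < n := lt_of_le_of_lt (Nat.zero_le j) (lt_of_lt_of_le hjk hkn)
      have hnr : (0:ℝ) < n := by exact_mod_cast hn0
      have hjr : (j:ℝ) < k := by exact_mod_cast hjk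
      have hkr : (k:ℝ) ≤ n := by exact_mod_cast hkn
      have hpi := Real.pi_pos
      have hmemj : (j*π/n : ℝ) ∈ Icc 0 π :=
        ⟨by positivity, by rw [div_le_iff₀ hnr]; nlinarith⟩
      have hmemk : (k*π/n : ℝ) ∈ Icc 0 π :=
        ⟨by positivity, by rw [div_le_iff₀ hnr]; nlinarith⟩
      have hangle : (j*π/n : ℝ) < k*π/n := by
        rw [div_lt_div_iff₀ hnr hnr]
        have hpn : (0:ℝ) < π * n := mul_pos hpi hnr
        nlinarith [mul_lt_mul_of_pos_right hjr hpn]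
      have hcos := Real.strictAntiOn_cos hmemj hmemk hangle
      simp only [hlamdef]
      nlinarith
    have hTval : ∀ k : ℕ, 0 < n →
        (T ℝ (n:ℤ)).eval (Real.cos (k*π/n)) = (-1)^k := by
      intro k hn
      rw [T_real_cos]
      have hnne : (n:ℝ) ≠ 0 := by positivity
      have h1 : ((n:ℤ):ℝ) * ((k:ℝ)*π/(n:ℝ)) = k * π := by
        push_cast
        field_simp
      rw [h1]
      have := Real.cos_nat_mul_pi_sub 0 k
      simpa using this
    have hsign : ∀ k : ℕ, 0 < n → 0 < (-1:ℝ)^k * r.eval (lam k) := by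
      intro k hn
      have h1 := hpb (lam k) (hlam_mem k)
      have habs := abs_lt.mp h1
      have h2 : r.eval (lam k) = (1/c0) * (-1)^k - p.eval (lam k) := by
        rw [hreval, hlam_arg k, hTval k hn]
      rw [h2]
      rcases Nat.even_or_odd k with he | ho
      · rw [he.neg_one_pow]; simp only [one_mul, mul_one]; linarith [habs.1, habs.2]
      · rw [ho.neg_one_pow]; have : (0:ℝ) < 1/c0 := by positivity
        nlinarith [habs.1, habs.2]
    have hroot : ∀ i : ℕ, i < n → ∃ x ∈ Ioo (lam i) (lam (i+1)), r.eval x = 0 := by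
      intro i hi
      have hn : 0 < n := lt_of_le_of_lt (Nat.zero_le i) hi
      have hs1 := hsign i hn
      have hs2 := hsign (i+1) hn
      have hle : lam i ≤ lam (i+1) := (hlam_lt i (i+1) (lt_add_one i) hi).le
      have hcont : ContinuousOn (fun x => r.eval x) (Icc (lam i) (lam (i+1))) :=
        r.continuous.continuousOn
      rcases Nat.even_or_odd i with he | ho
      · have h1 : 0 < r.eval (lam i) := by rw [he.neg_one_pow] at hs1; linarith
        have h2 : r.eval (lam (i+1)) < 0 := by
          rw [he.add_one.neg_one_pow] at hs2; linarith
        obtain ⟨x, hx, hx0⟩ := intermediate_value_Ioo' hle hcont ⟨h2, h1⟩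
        exact ⟨x, hx, hx0⟩
      · have h1 : r.eval (lam i) < 0 := by rw [ho.neg_one_pow] at hs1; linarith
        have h2 : 0 < r.eval (lam (i+1)) := by
          rw [ho.add_one.neg_one_pow] at hs2; linarith
        obtain ⟨x, hx, hx0⟩ := intermediate_value_Ioo hle hcont ⟨h1, h2⟩
        exact ⟨x, hx, hx0⟩
    have H : ∀ i : Fin (n+1), ∃ x : ℝ, r.eval x = 0 ∧
        (((i:ℕ) < n → x ∈ Ioo (lam i) (lam ((i:ℕ)+1))) ∧ ((i:ℕ) = n → x = 0)) := by
      intro i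
      by_cases hi : (i:ℕ) < n
      · obtain ⟨x, hx, hx0⟩ := hroot i hi
        exact ⟨x, hx0, fun _ => hx, fun h => absurd h (by omega)⟩
      · have hin : (i:ℕ) = n := by omega
        exact ⟨0, hr0, fun h => absurd h (by omega), fun _ => rfl⟩
    choose f hf0 hf using H
    have hfpos : ∀ i : Fin (n+1), (i:ℕ) < n → 0 < f i := by
      intro i hi
      have h1 := ((hf i).1 hi).1
      have h2 := (hlam_mem (i:ℕ)).1
      linarith
    have key : ∀ i j : Fin (n+1), (i:ℕ) < (j:ℕ) → f i ≠ f j := by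
      intro i j hij
      by_cases hj : (j:ℕ) < n
      · have hi : (i:ℕ) < n := lt_trans hij hj
        have h1 : f i < lam ((i:ℕ)+1) := ((hf i).1 hi).2
        have h2 : lam (j:ℕ) < f j := ((hf j).1 hj).1
        have h3 : lam ((i:ℕ)+1) ≤ lam (j:ℕ) := by
          rcases eq_or_lt_of_le (Nat.succ_le_of_lt hij) with he | hl
          · rw [show (i:ℕ)+1 = (j:ℕ) from he]
          · exact (hlam_lt _ _ hl hj.le).le
        exact ne_of_lt (by linarith)
      · have hjn : (j:ℕ) = n := by omega
        have hi : (i:ℕ) < n := by omega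
        rw [(hf j).2 hjn]
        exact (hfpos i hi).ne'
    have hinj : Function.Injective f := by
      intro i j hfeq
      by_contra hne
      rcases Ne.lt_or_gt hne with h | h
      · exact key i j h hfeq
      · exact key j i h hfeq.symm
    have hzero : r = 0 :=
      Polynomial.eq_zero_of_natDegree_lt_card_of_eval_eq_zero r hinj hf0
        (by simpa using Nat.lt_succ_of_le hrdeg)
    have hsub : Polynomial.C (1/c0) * Q - p = 0 := by rw [← hrdef]; exact hzero
    have hpQ : p = Polynomial.C (1/c0) * Q := (sub_eq_zero.mp hsub).symm
    have h1 := hpb m ⟨le_refl m, hmM.le⟩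
    have h2 : p.eval m = 1/c0 := by
      rw [hpQ]
      simp only [eval_mul, eval_C, hQeval m]
      rw [show (M + m - 2*m)/(M-m) = 1 by rw [show M+m-2*m = M-m by ring]; exact div_self hd.ne']
      rw [cheb_eval_one, mul_one]
    rw [h2, abs_of_pos (by positivity : (0:ℝ) < 1/c0)] at h1
    exact lt_irrefl _ h1
  · -- equality part
    apply IsGreatest.csSup_eq
    constructor
    · refine ⟨m, ⟨le_refl m, hmM.le⟩, ?_⟩
      beta_reduce
      rw [show (M + m - 2*m)/(M-m) = 1 by rw [show M+m-2*m = M-m by ring]; exact div_self hd.ne']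
      rw [cheb_eval_one, abs_of_pos (by positivity : (0:ℝ) < 1/c0)]
    · rintro x ⟨y, hy, rfl⟩
      obtain ⟨ha1, ha2⟩ := harg_mem y hy
      beta_reduce
      rw [abs_div, abs_of_pos hc0pos]
      have hTle := cheb_abs_le_one (n:ℤ) ha1 ha2
      gcongr
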